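/- The group G acts transitively on the set M_{1,0} = {X ∈ ℝ^{n+2} : Φ(X,X) = 1, Φ(I,X) = 0, X ∉ ℝ·I}: for any X, Y ∈ M_{1,0} there exists A ∈ G with A X = Y. (Flat-model orbit decomposition: the 'Spi' boundary piece M_{1,0} is a single orbit of the Poincaré subgroup.) -/

import Mathlib

/-- The diagonal symmetric bilinear form on `ℝ^m` whose first `k` diagonal
entries are `-1` and the remaining ones are `+1`. -/
def formSig (k m : ℕ) (x y : Fin m → ℝ) : ℝ :=
  ∑ i : Fin m, (if (i : ℕ) < k then -(x i * y i) else x i * y i)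

/-- `A` belongs to the 'Poincaré subgroup' of `SL(n+2,ℝ)` determined by the signature
`(2,n)` form `Φ = formSig 2 (n+2)` and the null vector `I`: it has determinant one,
preserves `Φ`, and fixes `I`. -/
def IsPoincareMat (n : ℕ) (I : Fin (n + 2) → ℝ)
    (A : Matrix (Fin (n + 2)) (Fin (n + 2)) ℝ) : Prop :=
  A.det = 1 ∧
    (∀ x y : Fin (n + 2) → ℝ,
      formSig 2 (n + 2) (A.mulVec x) (A.mulVec y) = formSig 2 (n + 2) x y) ∧
    A.mulVec I = I

/-- The set `M_{λ,s} = {X : Φ(X,X) = λ, Φ(I,X) = s, X ∉ ℝ·I}`. -/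
def Mset (n : ℕ) (I : Fin (n + 2) → ℝ) (lam s : ℝ) : Set (Fin (n + 2) → ℝ) :=
  {X | formSig 2 (n + 2) X X = lam ∧ formSig 2 (n + 2) I X = s ∧ ¬ ∃ c : ℝ, X = c • I}

/-! ### Auxiliary lemmas about `formSig` -/

namespace PoincareAux

open Matrix

variable {k m : ℕ}

theorem formSig_comm (x y : Fin m → ℝ) : formSig k m x y = formSig k m y x :=
  Finset.sum_congr rfl fun i _ => by split <;> ring

theorem formSig_add_right (x y z : Fin m → ℝ) :
    formSig k m x (y + z) = formSig k m x y + formSig k m x z := by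
  rw [formSig, formSig, formSig, ← Finset.sum_add_distrib]
  exact Finset.sum_congr rfl fun i _ => by by_cases h : (i:ℕ) < k <;>
    simp [h, Pi.add_apply] <;> ring

theorem formSig_smul_right (c : ℝ) (x y : Fin m → ℝ) :
    formSig k m x (c • y) = c * formSig k m x y := by
  rw [formSig, formSig, Finset.mul_sum]
  exact Finset.sum_congr rfl fun i _ => by by_cases h : (i:ℕ) < k <;>
    simp [h, Pi.smul_apply, smul_eq_mul] <;> ring

theorem formSig_sub_right (x y z : Fin m → ℝ) :
    formSig k m x (y - z) = formSig k m x y - formSig k m x z := by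
  have h1 := formSig_add_right (k := k) x y ((-1 : ℝ) • z)
  have h2 := formSig_smul_right (k := k) (-1 : ℝ) x z
  rw [h2] at h1
  have h3 : y + (-1 : ℝ) • z = y - z := by
    funext i; simp [sub_eq_add_neg]
  rw [h3] at h1
  rw [h1]; ring

theorem formSig_add_left (x y z : Fin m → ℝ) :
    formSig k m (x + y) z = formSig k m x z + formSig k m y z := by
  rw [formSig_comm, formSig_add_right, formSig_comm z x, formSig_comm z y]

theorem formSig_sub_left (x y z : Fin m → ℝ) :
    formSig k m (x - y) z = formSig k m x z - formSig k m y z := by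
  rw [formSig_comm, formSig_sub_right, formSig_comm z x, formSig_comm z y]

theorem formSig_smul_left (c : ℝ) (x y : Fin m → ℝ) :
    formSig k m (c • x) y = c * formSig k m x y := by
  rw [formSig_comm, formSig_smul_right, formSig_comm y x]

theorem formSig_single (x : Fin m → ℝ) (j : Fin m) (c : ℝ) :
    formSig k m x (Pi.single j c) = if (j:ℕ) < k then -(x j * c) else x j * c := by
  rw [formSig]
  rw [Finset.sum_eq_single j]
  · simp
  · intro i _ hij
    rw [Pi.single_eq_of_ne hij]
    split <;> ring
  · simp

theorem formSig_eq_zero_of_forall (v : Fin m → ℝ)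
    (h : ∀ x, formSig k m v x = 0) : v = 0 := by
  funext i
  have := h (Pi.single i 1)
  rw [formSig_single] at this
  by_cases hi : (i:ℕ) < k <;> simp [hi] at this <;> simpa using this

/-! ### Reflections -/

/-- signed copy of `w`, so that `(dvec w) ⬝ᵥ x = formSig k m w x` -/
def dvec (k m : ℕ) (w : Fin m → ℝ) : Fin m → ℝ :=
  fun i => if (i : ℕ) < k then -(w i) else w i

theorem dvec_dot (k m : ℕ) (w x : Fin m → ℝ) : dvec k m w ⬝ᵥ x = formSig k m w x := by
  unfold dvec formSig dotProduct
  exact Finset.sum_congr rfl fun i _ => by by_cases h : (i:ℕ) < k <;> simp [h]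

/-- reflection in the vector `w` (an honest reflection when `formSig k m w w ≠ 0`). -/
noncomputable def reflMat (k m : ℕ) (w : Fin m → ℝ) : Matrix (Fin m) (Fin m) ℝ :=
  1 - (2 / formSig k m w w) • vecMulVec w (dvec k m w)

theorem vecMulVec_mulVec' (u v x : Fin m → ℝ) :
    vecMulVec u v *ᵥ x = (v ⬝ᵥ x) • u := by
  funext i
  simp only [mulVec, dotProduct, vecMulVec_apply, Pi.smul_apply, smul_eq_mul,
    Finset.sum_mul, Finset.mul_sum]
  exact Finset.sum_congr rfl fun j _ => by ring

theorem reflMat_mulVec (k m : ℕ) (w x : Fin m → ℝ) :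
    reflMat k m w *ᵥ x = x - ((2 / formSig k m w w) * formSig k m w x) • w := by
  rw [reflMat, sub_mulVec, one_mulVec, smul_mulVec, vecMulVec_mulVec', dvec_dot,
    smul_smul]

theorem reflMat_det (k m : ℕ) (w : Fin m → ℝ) (hw : formSig k m w w ≠ 0) :
    (reflMat k m w).det = -1 := by
  have h1 : reflMat k m w
      = 1 + replicateCol Unit ((-(2 / formSig k m w w)) • w) * replicateRow Unit (dvec k m w) := by
    rw [← vecMulVec_eq Unit]
    rw [reflMat, sub_eq_add_neg]
    congr 1
    funext i j
    simp [vecMulVec_apply, Pi.smul_apply, smul_eq_mul]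
    ring
  rw [h1, det_one_add_replicateCol_mul_replicateRow]
  rw [dotProduct_smul, dvec_dot]
  field_simp
  rw [smul_eq_mul, neg_mul, div_mul_cancel₀ 2 hw]; norm_num

theorem reflMat_preserves (k m : ℕ) (w : Fin m → ℝ) (hw : formSig k m w w ≠ 0)
    (x y : Fin m → ℝ) :
    formSig k m (reflMat k m w *ᵥ x) (reflMat k m w *ᵥ y) = formSig k m x y := by
  rw [reflMat_mulVec, reflMat_mulVec]
  rw [formSig_sub_left, formSig_sub_right, formSig_sub_right,
    formSig_smul_left, formSig_smul_left, formSig_smul_right, formSig_smul_right,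
    formSig_comm w x]
  field_simp
  ring

theorem reflMat_fix (k m : ℕ) (w x : Fin m → ℝ) (h : formSig k m w x = 0) :
    reflMat k m w *ᵥ x = x := by
  rw [reflMat_mulVec, h]
  simp

/-- The reflection in `u - v` sends `u` to `v` whenever `u,v` have the same norm and
`u - v` is not isotropic. -/
theorem reflMat_swap (k m : ℕ) (u v : Fin m → ℝ) (huv : formSig k m u u = formSig k m v v)
    (hw : formSig k m (u - v) (u - v) ≠ 0) :
    reflMat k m (u - v) *ᵥ u = v := by
  have h1 : formSig k m (u - v) (u - v) = 2 * formSig k m (u - v) u := by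
    rw [formSig_sub_right, formSig_sub_left, formSig_sub_left, formSig_comm v u]
    linarith [huv]
  rw [reflMat_mulVec, h1]
  have h2 : formSig k m (u - v) u ≠ 0 := by
    intro h; rw [h] at h1; simp at h1; exact hw (by rw [h1])
  have : 2 / (2 * formSig k m (u - v) u) * formSig k m (u - v) u = 1 := by
    field_simp
  rw [this, one_smul]
  abel

/-! ### Existence of a non-isotropic vector orthogonal to `I` and `Y` -/

theorem exists_orth (n : ℕ) (hn : 2 ≤ n) (I Y : Fin (n+2) → ℝ) (hI : I ≠ 0)
    (hIY : formSig 2 (n+2) I Y = 0) (hYY : formSig 2 (n+2) Y Y = 1) :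
    ∃ w, formSig 2 (n+2) I w = 0 ∧ formSig 2 (n+2) Y w = 0 ∧ formSig 2 (n+2) w w ≠ 0 := by
  classical
  -- a vector `J` with `Φ I J = 1`
  obtain ⟨j, hj⟩ : ∃ j, I j ≠ 0 := by
    by_contra h
    push_neg at h
    exact hI (funext fun j => h j)
  obtain ⟨J, hIJ⟩ : ∃ J, formSig 2 (n+2) I J = 1 := by
    refine ⟨Pi.single j (1 / (if (j:ℕ) < 2 then -(I j) else I j)), ?_⟩
    rw [formSig_single]
    split <;> rename_i h <;> simp [h] <;> field_simp
  -- correct it to `p` with `Φ I p = 1`, `Φ Y p = 0`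
  obtain ⟨p, hIp, hYp⟩ : ∃ p, formSig 2 (n+2) I p = 1 ∧ formSig 2 (n+2) Y p = 0 := by
    refine ⟨J - (formSig 2 (n+2) Y J) • Y, ?_, ?_⟩
    · rw [formSig_sub_right, formSig_smul_right, hIJ, hIY]; ring
    · rw [formSig_sub_right, formSig_smul_right, hYY]; ring
  by_contra hcon
  push_neg at hcon
  have hcon' : ∀ w, formSig 2 (n+2) I w = 0 → formSig 2 (n+2) Y w = 0 →
      formSig 2 (n+2) w w = 0 := by
    intro w h1 h2
    by_contra h3
    exact h3 (hcon w h1 h2)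
  -- `W`-membership of the projection of any vector
  have hπW : ∀ x : Fin (n+2) → ℝ,
      formSig 2 (n+2) I (x - (formSig 2 (n+2) Y x) • Y - (formSig 2 (n+2) I x) • p) = 0 ∧
      formSig 2 (n+2) Y (x - (formSig 2 (n+2) Y x) • Y - (formSig 2 (n+2) I x) • p) = 0 := by
    intro x
    constructor
    · rw [formSig_sub_right, formSig_sub_right, formSig_smul_right, formSig_smul_right,
        hIY, hIp]; ring
    · rw [formSig_sub_right, formSig_sub_right, formSig_smul_right, formSig_smul_right,
        hYY, hYp]; ring
  -- polarization: any two elements of `W` are orthogonal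
  have hpol : ∀ z z', formSig 2 (n+2) I z = 0 → formSig 2 (n+2) Y z = 0 →
      formSig 2 (n+2) I z' = 0 → formSig 2 (n+2) Y z' = 0 →
      formSig 2 (n+2) z z' = 0 := by
    intro z z' h1 h2 h3 h4
    have hsum := hcon' (z + z') (by rw [formSig_add_right, h1, h3]; ring)
      (by rw [formSig_add_right, h2, h4]; ring)
    rw [formSig_add_right, formSig_add_left, formSig_add_left] at hsum
    have hz := hcon' z h1 h2
    have hz' := hcon' z' h3 h4
    have hcomm : formSig 2 (n+2) z z' = formSig 2 (n+2) z' z := formSig_comm _ _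
    linarith
  -- hence every element of `W` is proportional to `I`
  have hprop : ∀ z, formSig 2 (n+2) I z = 0 → formSig 2 (n+2) Y z = 0 →
      z = (formSig 2 (n+2) z p) • I := by
    intro z h1 h2
    have key : ∀ x', formSig 2 (n+2) (z - (formSig 2 (n+2) z p) • I) x' = 0 := by
      intro x'
      obtain ⟨hw1, hw2⟩ := hπW x'
      have h5 := hpol z _ h1 h2 hw1 hw2
      rw [formSig_sub_right, formSig_sub_right, formSig_smul_right, formSig_smul_right] at h5
      have h6 : formSig 2 (n+2) z Y = 0 := by rw [formSig_comm]; exact h2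
      have h7 : formSig 2 (n+2) z I = 0 := by rw [formSig_comm]; exact h1
      rw [h6, mul_zero, sub_zero] at h5
      rw [formSig_sub_left, formSig_smul_left]
      linarith [mul_comm (formSig 2 (n+2) z p) (formSig 2 (n+2) I x'), h5]
    have := formSig_eq_zero_of_forall _ key
    rwa [sub_eq_zero] at this
  -- so every vector lies in the span of `Y, p, I`
  have hmem : ∀ x : Fin (n+2) → ℝ, x ∈ Submodule.span ℝ (Set.range ![Y, p, I]) := by
    intro x
    obtain ⟨hw1, hw2⟩ := hπW x
    have hx := hprop _ hw1 hw2
    rw [sub_sub, sub_eq_iff_eq_add] at hx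
    rw [hx]
    have hYm : Y ∈ Submodule.span ℝ (Set.range ![Y, p, I]) :=
      Submodule.subset_span ⟨0, rfl⟩
    have hpm : p ∈ Submodule.span ℝ (Set.range ![Y, p, I]) :=
      Submodule.subset_span ⟨1, rfl⟩
    have hIm : I ∈ Submodule.span ℝ (Set.range ![Y, p, I]) :=
      Submodule.subset_span ⟨2, rfl⟩
    exact Submodule.add_mem _ (Submodule.smul_mem _ _ hIm)
      (Submodule.add_mem _ (Submodule.smul_mem _ _ hYm) (Submodule.smul_mem _ _ hpm))
  have hStop : Submodule.span ℝ (Set.range ![Y, p, I]) = ⊤ := by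
    rw [Submodule.eq_top_iff']
    exact hmem
  have h1 : Module.finrank ℝ (Submodule.span ℝ (Set.range ![Y, p, I])) ≤ 3 := by
    have := finrank_range_le_card (R := ℝ) ![Y, p, I]
    simpa [Set.finrank] using this
  have h2 : Module.finrank ℝ (Submodule.span ℝ (Set.range ![Y, p, I])) = n + 2 := by
    rw [hStop, finrank_top]
    simp
  omega

/-- composing two form-preserving, `I`-fixing, det `-1` matrices -/
theorem comp_poincare (n : ℕ) (I : Fin (n+2) → ℝ)
    (R S : Matrix (Fin (n+2)) (Fin (n+2)) ℝ)
    (hR : R.det = -1) (hS : S.det = -1)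
    (hRp : ∀ x y, formSig 2 (n+2) (R.mulVec x) (R.mulVec y) = formSig 2 (n+2) x y)
    (hSp : ∀ x y, formSig 2 (n+2) (S.mulVec x) (S.mulVec y) = formSig 2 (n+2) x y)
    (hRI : R.mulVec I = I) (hSI : S.mulVec I = I) :
    IsPoincareMat n I (R * S) := by
  refine ⟨?_, ?_, ?_⟩
  · rw [Matrix.det_mul, hR, hS]; norm_num
  · intro x y
    rw [← Matrix.mulVec_mulVec, ← Matrix.mulVec_mulVec, hRp, hSp]
  · rw [← Matrix.mulVec_mulVec, hSI, hRI]

end PoincareAux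

open PoincareAux Matrix

/-- The Poincaré subgroup acts transitively on the flat-model boundary piece
`Spi = M_{1,0}`. -/
theorem poincare_transitive_on_Spi
    (n : ℕ) (hn : 2 ≤ n) (I : Fin (n + 2) → ℝ) (hI : I ≠ 0)
    (hII : formSig 2 (n + 2) I I = 0)
    (X Y : Fin (n + 2) → ℝ) (hX : X ∈ Mset n I 1 0) (hY : Y ∈ Mset n I 1 0) :
    ∃ A : Matrix (Fin (n + 2)) (Fin (n + 2)) ℝ, IsPoincareMat n I A ∧ A.mulVec X = Y := by
  obtain ⟨hXX, hIX, -⟩ := hX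
  obtain ⟨hYY, hIY, -⟩ := hY
  have hXI : formSig 2 (n+2) X I = 0 := by rw [formSig_comm]; exact hIX
  have hYI : formSig 2 (n+2) Y I = 0 := by rw [formSig_comm]; exact hIY
  have hcomm : formSig 2 (n+2) Y X = formSig 2 (n+2) X Y := formSig_comm _ _
  by_cases hc : formSig 2 (n + 2) (X + Y) (X + Y) = 0
  · -- isotropic `X + Y`: use a reflection in `X - Y` followed by one orthogonal to `I, Y`
    have hXY : formSig 2 (n+2) X Y = -1 := by
      rw [formSig_add_right, formSig_add_left, formSig_add_left] at hc
      linarith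
    have hsub : formSig 2 (n+2) (X - Y) (X - Y) = 4 := by
      rw [formSig_sub_right, formSig_sub_left, formSig_sub_left]
      linarith
    have hsub' : formSig 2 (n+2) (X - Y) (X - Y) ≠ 0 := by rw [hsub]; norm_num
    obtain ⟨w, hwI, hwY, hww⟩ := exists_orth n hn I Y hI hIY hYY
    refine ⟨reflMat 2 (n+2) w * reflMat 2 (n+2) (X - Y), ?_, ?_⟩
    · refine comp_poincare n I _ _ (reflMat_det _ _ _ hww) (reflMat_det _ _ _ hsub')
        (reflMat_preserves _ _ _ hww) (reflMat_preserves _ _ _ hsub') ?_ ?_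
      · exact reflMat_fix _ _ _ _ (by rw [formSig_comm]; exact hwI)
      · refine reflMat_fix _ _ _ _ ?_
        rw [formSig_sub_left, hXI, hYI]; ring
    · rw [← Matrix.mulVec_mulVec, reflMat_swap 2 (n+2) X Y (by rw [hXX, hYY]) hsub']
      exact reflMat_fix _ _ _ _ (by rw [formSig_comm]; exact hwY)
  · -- non-isotropic `X + Y`: reflect in `X + Y`, then in `Y`
    have hQY : formSig 2 (n+2) Y Y ≠ 0 := by rw [hYY]; norm_num
    have hnegY : formSig 2 (n+2) (-Y) (-Y) = 1 := by
      rw [show -Y = (-1 : ℝ) • Y from (neg_one_smul ℝ Y).symm, formSig_smul_left,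
        formSig_smul_right, hYY]; ring
    have hYnegY : formSig 2 (n+2) Y (-Y) = -1 := by
      rw [show -Y = (-1 : ℝ) • Y from (neg_one_smul ℝ Y).symm, formSig_smul_right, hYY]; ring
    have hswap : reflMat 2 (n+2) (X + Y) *ᵥ X = -Y := by
      rw [show X + Y = X - (-Y) by rw [sub_neg_eq_add]]
      exact reflMat_swap 2 (n+2) X (-Y) (by rw [hXX, hnegY])
        (by rw [sub_neg_eq_add]; exact hc)
    have hstep2 : reflMat 2 (n+2) Y *ᵥ (-Y) = Y := by
      rw [reflMat_mulVec]
      have h2 : (2 / formSig 2 (n+2) Y Y) * formSig 2 (n+2) Y (-Y) = -2 := by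
        rw [hYY, hYnegY]; norm_num
      rw [h2]
      funext i
      simp only [Pi.sub_apply, Pi.neg_apply, Pi.smul_apply, smul_eq_mul]
      ring
    refine ⟨reflMat 2 (n+2) Y * reflMat 2 (n+2) (X + Y), ?_, ?_⟩
    · refine comp_poincare n I _ _ (reflMat_det _ _ _ hQY) (reflMat_det _ _ _ hc)
        (reflMat_preserves _ _ _ hQY) (reflMat_preserves _ _ _ hc) ?_ ?_
      · exact reflMat_fix _ _ _ _ hYI
      · refine reflMat_fix _ _ _ _ ?_
        rw [formSig_add_left, hXI, hYI]; ring
    · rw [← Matrix.mulVec_mulVec, hswap, hstep2]
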